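/- For each integer k ≥ 1, the homogeneous polynomial P_{2k}(X, Y) defined by P_{2k}(sin α, cos α) = 2^{k+1}(−1)^k (cos^{2k}(α) − cos^{2k}(α + 2π/3) − cos^{2k}(α − 2π/3)) for all α is divisible by 3X² − Y² in ℝ[X, Y]. -/

import Mathlib

open Real

lemma eval_smul_of_homog {σ : Type*} {n : ℕ} {P : MvPolynomial σ ℝ}
    (hP : P.IsHomogeneous n) (c : ℝ) (f : σ → ℝ) :
    MvPolynomial.eval (fun i => c * f i) P = c ^ n * MvPolynomial.eval f P := by
  rw [MvPolynomial.eval_eq, MvPolynomial.eval_eq, Finset.mul_sum]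
  apply Finset.sum_congr rfl
  intro d hd
  rw [MvPolynomial.mem_support_iff] at hd
  have hdeg : ∑ i ∈ d.support, d i = n := by
    have := hP hd
    rw [Pi.one_def, ← Finsupp.degree_eq_weight_one] at this
    exact this
  calc P.coeff d * ∏ i ∈ d.support, (c * f i) ^ d i
      = P.coeff d * ((∏ i ∈ d.support, c ^ d i) * ∏ i ∈ d.support, f i ^ d i) := by
        rw [← Finset.prod_mul_distrib]; simp [mul_pow]
    _ = c ^ n * (P.coeff d * ∏ i ∈ d.support, f i ^ d i) := by
        rw [Finset.prod_pow_eq_pow_sum, hdeg]; ring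

theorem stmt15 (k : ℕ) (hk : 1 ≤ k) (P : MvPolynomial (Fin 2) ℝ)
    (hhom : P.IsHomogeneous (2 * k))
    (heval : ∀ α : ℝ,
      MvPolynomial.eval (fun i => if i = 0 then sin α else cos α) P
        = 2 ^ (k + 1) * (-1) ^ k *
          (cos α ^ (2 * k) - cos (α + 2 * π / 3) ^ (2 * k) - cos (α - 2 * π / 3) ^ (2 * k))) :
    ∃ Q : MvPolynomial (Fin 2) ℝ,
      P = (3 * (MvPolynomial.X 0) ^ 2 - (MvPolynomial.X 1) ^ 2) * Q := by
  have hev : Even (2 * k) := even_two_mul k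
  have h2k : 2 * k ≠ 0 := by omega
  -- evaluation at α = π/6 : point (1/2, √3/2)
  have h1 : MvPolynomial.eval (fun i : Fin 2 => if i = 0 then (1/2 : ℝ) else Real.sqrt 3 / 2) P = 0 := by
    have h := heval (π / 6)
    have e1 : π / 6 + 2 * π / 3 = π - π / 6 := by ring
    have e2 : π / 6 - 2 * π / 3 = -(π / 2) := by ring
    simp only [e1, e2, Real.cos_neg, Real.cos_pi_sub, Real.cos_pi_div_two,
      Real.cos_pi_div_six, Real.sin_pi_div_six, Real.sin_neg, hev.neg_pow,
      zero_pow h2k] at h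
    simpa using h
  -- evaluation at α = -π/6 : point (-1/2, √3/2)
  have h2 : MvPolynomial.eval (fun i : Fin 2 => if i = 0 then (-(1/2) : ℝ) else Real.sqrt 3 / 2) P = 0 := by
    have h := heval (-(π / 6))
    have e1 : -(π / 6) + 2 * π / 3 = π / 2 := by ring
    have e2 : -(π / 6) - 2 * π / 3 = -(π - π / 6) := by ring
    simp only [e1, e2, Real.cos_neg, Real.cos_pi_sub, Real.cos_pi_div_two,
      Real.cos_pi_div_six, Real.sin_neg, Real.sin_pi_div_six, hev.neg_pow,
      zero_pow h2k] at h
    simpa using h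
  -- two families of zeros
  have hz1 : ∀ t : ℝ, MvPolynomial.eval (fun i : Fin 2 => if i = 0 then t else Real.sqrt 3 * t) P = 0 := by
    intro t
    have := eval_smul_of_homog hhom (2 * t) (fun i : Fin 2 => if i = 0 then (1/2 : ℝ) else Real.sqrt 3 / 2)
    rw [h1, mul_zero] at this
    rw [show (fun i : Fin 2 => if i = 0 then t else Real.sqrt 3 * t) =
      (fun i : Fin 2 => 2 * t * if i = 0 then (1/2 : ℝ) else Real.sqrt 3 / 2) by
        funext i; by_cases hi : i = 0 <;> simp [hi] <;> ring]
    exact this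
  have hz2 : ∀ t : ℝ, MvPolynomial.eval (fun i : Fin 2 => if i = 0 then t else -(Real.sqrt 3 * t)) P = 0 := by
    intro t
    have := eval_smul_of_homog hhom (-(2 * t)) (fun i : Fin 2 => if i = 0 then (-(1/2) : ℝ) else Real.sqrt 3 / 2)
    rw [h2, mul_zero] at this
    rw [show (fun i : Fin 2 => if i = 0 then t else -(Real.sqrt 3 * t)) =
      (fun i : Fin 2 => -(2 * t) * if i = 0 then (-(1/2) : ℝ) else Real.sqrt 3 / 2) by
        funext i; by_cases hi : i = 0 <;> simp [hi] <;> ring]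
    exact this
  -- pass to Polynomial over MvPolynomial (Fin 1)
  set φ := MvPolynomial.finSuccEquiv ℝ 1 with hφ
  set A := MvPolynomial (Fin 1) ℝ
  set M : Polynomial A := Polynomial.X ^ 2 -
    Polynomial.C (MvPolynomial.C (3⁻¹ : ℝ) * MvPolynomial.X 0 ^ 2) with hM
  have hMonic : M.Monic := Polynomial.monic_X_pow_sub_C _ two_ne_zero
  set P' : Polynomial A := φ P with hP'
  have hdm : M * (P' /ₘ M) + P' %ₘ M = P' := by
    rw [add_comm]; exact Polynomial.modByMonic_add_div P' M
  set a : A := (P' %ₘ M).coeff 0 with ha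
  set b : A := (P' %ₘ M).coeff 1 with hb
  have hRdeg : (P' %ₘ M).natDegree ≤ 1 := by
    have h := Polynomial.degree_modByMonic_lt P' hMonic
    have hMdeg : M.degree = 2 := by
      rw [hM]; exact Polynomial.degree_X_pow_sub_C (by norm_num) _
    rw [hMdeg] at h
    by_cases h0 : P' %ₘ M = 0
    · simp [h0]
    · have := (Polynomial.degree_eq_natDegree h0) ▸ h
      exact_mod_cast Nat.lt_succ_iff.mp (by exact_mod_cast this)
  have hRform : P' %ₘ M = Polynomial.C b * Polynomial.X + Polynomial.C a :=
    Polynomial.eq_X_add_C_of_natDegree_le_one hRdeg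
  -- evaluation identity
  have keyeval : ∀ x y : ℝ, y ^ 2 = 3 * x ^ 2 →
      MvPolynomial.eval (fun i : Fin 2 => if i = 0 then x else y) P =
        MvPolynomial.eval (fun _ : Fin 1 => y) a +
          MvPolynomial.eval (fun _ : Fin 1 => y) b * x := by
    intro x y hxy
    have hpt : (fun i : Fin 2 => if i = 0 then x else y) =
        Fin.cons x (fun _ : Fin 1 => y) := by
      funext i
      refine Fin.cases ?_ ?_ i
      · simp
      · intro j; simp [Fin.succ_ne_zero]
    rw [hpt, MvPolynomial.eval_eq_eval_mv_eval']
    rw [← hP', ← hdm]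
    simp only [Polynomial.map_add, Polynomial.map_mul, Polynomial.eval_add,
      Polynomial.eval_mul]
    have hMev : Polynomial.eval x (Polynomial.map (MvPolynomial.eval fun _ : Fin 1 => y) M) = 0 := by
      rw [hM]
      rw [Polynomial.map_sub, Polynomial.map_pow, Polynomial.map_X, Polynomial.map_C,
        Polynomial.eval_sub, Polynomial.eval_pow, Polynomial.eval_X, Polynomial.eval_C,
        map_mul, map_pow, MvPolynomial.eval_C, MvPolynomial.eval_X]
      show x ^ 2 - 3⁻¹ * y ^ 2 = 0
      linear_combination (-(3:ℝ)⁻¹) * hxy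
    rw [hMev, zero_mul, zero_add, hRform]
    simp only [Polynomial.map_add, Polynomial.map_mul, Polynomial.map_C, Polynomial.map_X,
      Polynomial.eval_add, Polynomial.eval_mul, Polynomial.eval_C, Polynomial.eval_X]
    ring
  -- a = 0
  have hs3 : Real.sqrt 3 ≠ 0 := by positivity
  have hsq3 : Real.sqrt 3 ^ 2 = 3 := Real.sq_sqrt (by norm_num)
  have hab : ∀ y : ℝ, MvPolynomial.eval (fun _ : Fin 1 => y) a = 0 ∧
      y * MvPolynomial.eval (fun _ : Fin 1 => y) b = 0 := by
    intro y
    have hyy : y ^ 2 = 3 * (y / Real.sqrt 3) ^ 2 := by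
      rw [div_pow, hsq3]; ring
    have hyy' : y ^ 2 = 3 * (-(y / Real.sqrt 3)) ^ 2 := by rw [neg_sq]; exact hyy
    have k1 := keyeval (y / Real.sqrt 3) y hyy
    have k2 := keyeval (-(y / Real.sqrt 3)) y hyy'
    have z1 : MvPolynomial.eval (fun i : Fin 2 => if i = 0 then y / Real.sqrt 3 else y) P = 0 := by
      have := hz1 (y / Real.sqrt 3)
      rw [mul_div_cancel₀ _ hs3] at this
      exact this
    have z2 : MvPolynomial.eval (fun i : Fin 2 => if i = 0 then -(y / Real.sqrt 3) else y) P = 0 := by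
      have := hz2 (-(y / Real.sqrt 3))
      rw [mul_neg, neg_neg, mul_div_cancel₀ _ hs3] at this
      exact this
    rw [z1] at k1
    rw [z2] at k2
    constructor
    · linarith
    · have hb0 : MvPolynomial.eval (fun _ : Fin 1 => y) b * (y / Real.sqrt 3) = 0 := by
        linarith
      have := congrArg (· * Real.sqrt 3) hb0
      simp only [zero_mul] at this
      calc y * MvPolynomial.eval (fun _ : Fin 1 => y) b
          = MvPolynomial.eval (fun _ : Fin 1 => y) b * (y / Real.sqrt 3) * Real.sqrt 3 := by
            field_simp
        _ = 0 := this
  have ha0 : a = 0 := by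
    apply MvPolynomial.funext
    intro x
    have hx : (fun _ : Fin 1 => x 0) = x := funext fun i => by rw [Subsingleton.elim i 0]
    rw [map_zero, ← hx]
    exact (hab (x 0)).1
  have hb0 : b = 0 := by
    have hXb : (MvPolynomial.X 0 : A) * b = 0 := by
      apply MvPolynomial.funext
      intro x
      have hx : (fun _ : Fin 1 => x 0) = x := funext fun i => by rw [Subsingleton.elim i 0]
      rw [map_zero, ← hx, map_mul, MvPolynomial.eval_X]
      exact (hab (x 0)).2
    rcases mul_eq_zero.mp hXb with h | h
    · exact absurd h (MvPolynomial.X_ne_zero 0)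
    · exact h
  have hR0 : P' %ₘ M = 0 := by
    rw [hRform, ha0, hb0]; simp
  have hfact : P' = M * (P' /ₘ M) := by
    rw [hR0, add_zero] at hdm
    exact hdm.symm
  -- pull back
  have hC : φ (MvPolynomial.C (3⁻¹ : ℝ)) = Polynomial.C (MvPolynomial.C (3⁻¹ : ℝ)) := by
    have h1 : (MvPolynomial.C (3⁻¹ : ℝ) : MvPolynomial (Fin 2) ℝ)
        = algebraMap ℝ (MvPolynomial (Fin 2) ℝ) (3⁻¹ : ℝ) := rfl
    rw [h1, AlgEquiv.commutes]
    simp [Polynomial.algebraMap_apply, MvPolynomial.algebraMap_eq]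
  have hX1 : (MvPolynomial.X 1 : MvPolynomial (Fin 2) ℝ) = MvPolynomial.X (Fin.succ 0) := rfl
  have hsymmM : φ.symm M =
      MvPolynomial.X 0 ^ 2 - MvPolynomial.C (3⁻¹ : ℝ) * MvPolynomial.X 1 ^ 2 := by
    apply φ.injective
    rw [AlgEquiv.apply_symm_apply, hM, hX1]
    simp only [map_sub, map_mul, map_pow, MvPolynomial.finSuccEquiv_X_zero,
      MvPolynomial.finSuccEquiv_X_succ, hC, Polynomial.C_pow, Polynomial.C_mul, hφ]
    rw [← hφ, hC]
  have hPP : P = φ.symm P' := (φ.symm_apply_apply P).symm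
  have hPfact : P = φ.symm M * φ.symm (P' /ₘ M) := by
    conv_lhs => rw [hPP, hfact, map_mul]
  refine ⟨MvPolynomial.C (3⁻¹ : ℝ) * φ.symm (P' /ₘ M), ?_⟩
  rw [hPfact, hsymmM]
  have h3 : (MvPolynomial.C (3⁻¹ : ℝ) : MvPolynomial (Fin 2) ℝ) * 3 = 1 := by
    rw [show (3 : MvPolynomial (Fin 2) ℝ) = MvPolynomial.C (3 : ℝ) from (map_ofNat MvPolynomial.C 3).symm]
    rw [← map_mul]
    norm_num
  linear_combination (-(MvPolynomial.X 0 ^ 2 * φ.symm (P' /ₘ M))) * h3
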